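/- Let (X_P,Y_P) and (X_Q,Y_Q) be two solutions of System (*) with X_P ≠ X_Q. If Γ_T(Y_P) = Γ_T(Y_Q) for each T ∈ {A,B,C,D}, then the four points A,B,C,D are coplanar. -/

import Mathlib

noncomputable section

/-- The Euclidean space ℝ³. -/
abbrev E3 := EuclideanSpace ℝ (Fin 3)

/-- `kc Xs Ys T` is the constant `k_T = 1/‖X*−T‖² + 1/‖Y*−T‖²`. -/
def kc (Xs Ys T : E3) : ℝ := 1 / ‖Xs - T‖ ^ 2 + 1 / ‖Ys - T‖ ^ 2

/-- `(X, Y)` is a solution of System (*). -/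
def IsSol (A B C D E F Xs Ys X Y : E3) : Prop :=
  ∀ T ∈ ({A, B, C, D, E, F} : Set E3),
    X ≠ T ∧ Y ≠ T ∧ 1 / ‖X - T‖ ^ 2 + 1 / ‖Y - T‖ ^ 2 = kc Xs Ys T

/-- Condition (i): no four of the six points `A,B,C,D,E,F` are coplanar. -/
def CondI (A B C D E F : E3) : Prop :=
  ∀ T₁ T₂ T₃ T₄ : E3,
    T₁ ∈ ({A, B, C, D, E, F} : Set E3) → T₂ ∈ ({A, B, C, D, E, F} : Set E3) →
    T₃ ∈ ({A, B, C, D, E, F} : Set E3) → T₄ ∈ ({A, B, C, D, E, F} : Set E3) →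
    T₁ ≠ T₂ → T₁ ≠ T₃ → T₁ ≠ T₄ → T₂ ≠ T₃ → T₂ ≠ T₄ → T₃ ≠ T₄ →
    ¬ Coplanar ℝ ({T₁, T₂, T₃, T₄} : Set E3)

/-- Condition (ii): no four of the six spheres of center `T` and radius `1/√k_T`
share a common point of ℝ³. -/
def CondII (A B C D E F Xs Ys : E3) : Prop :=
  ∀ T₁ T₂ T₃ T₄ : E3,
    T₁ ∈ ({A, B, C, D, E, F} : Set E3) → T₂ ∈ ({A, B, C, D, E, F} : Set E3) →
    T₃ ∈ ({A, B, C, D, E, F} : Set E3) → T₄ ∈ ({A, B, C, D, E, F} : Set E3) →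
    T₁ ≠ T₂ → T₁ ≠ T₃ → T₁ ≠ T₄ → T₂ ≠ T₃ → T₂ ≠ T₄ → T₃ ≠ T₄ →
    ¬ ∃ P : E3,
        ‖P - T₁‖ ^ 2 = 1 / kc Xs Ys T₁ ∧ ‖P - T₂‖ ^ 2 = 1 / kc Xs Ys T₂ ∧
        ‖P - T₃‖ ^ 2 = 1 / kc Xs Ys T₃ ∧ ‖P - T₄‖ ^ 2 = 1 / kc Xs Ys T₄

/-- `Γ_T(Y) = ‖Y−T‖²/(k_T‖Y−T‖² − 1) − ‖T‖²`. -/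
def Gamma (Xs Ys T Y : E3) : ℝ :=
  ‖Y - T‖ ^ 2 / (kc Xs Ys T * ‖Y - T‖ ^ 2 - 1) - ‖T‖ ^ 2
/-- From a solution equation at `T`, `Γ_T(Y) = ‖X−T‖² − ‖T‖²`. -/
lemma gamma_eq_of_sol (Xs Ys T X Y : E3) (hX : X ≠ T) (hY : Y ≠ T)
    (h : 1 / ‖X - T‖ ^ 2 + 1 / ‖Y - T‖ ^ 2 = kc Xs Ys T) :
    Gamma Xs Ys T Y = ‖X - T‖ ^ 2 - ‖T‖ ^ 2 := by
  have ha : ‖X - T‖ ^ 2 ≠ 0 := by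
    exact pow_ne_zero 2 (norm_ne_zero_iff.mpr (sub_ne_zero.mpr hX))
  have hb : ‖Y - T‖ ^ 2 ≠ 0 := by
    exact pow_ne_zero 2 (norm_ne_zero_iff.mpr (sub_ne_zero.mpr hY))
  have h1 : kc Xs Ys T * ‖Y - T‖ ^ 2 - 1 = ‖Y - T‖ ^ 2 / ‖X - T‖ ^ 2 := by
    rw [← h, add_mul, one_div_mul_cancel hb, one_div_mul_eq_div]; ring
  unfold Gamma
  rw [h1]
  rw [div_div_cancel₀ hb]

/-- If (X_P,Y_P) and (X_Q,Y_Q) are solutions of System (*) with X_P ≠ X_Q and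
Γ_T(Y_P) = Γ_T(Y_Q) for each T ∈ {A,B,C,D}, then A,B,C,D are coplanar. -/
theorem equal_gammas_implies_coplanar (A B C D E F Xs Ys : E3)
    (hdist : List.Pairwise (· ≠ ·) [A, B, C, D, E, F, Xs, Ys])
    (XP YP XQ YQ : E3)
    (hP : IsSol A B C D E F Xs Ys XP YP) (hQ : IsSol A B C D E F Xs Ys XQ YQ)
    (hXPQ : XP ≠ XQ)
    (hgamma : ∀ T ∈ ({A, B, C, D} : Set E3), Gamma Xs Ys T YP = Gamma Xs Ys T YQ) :
    Coplanar ℝ ({A, B, C, D} : Set E3) := by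
  -- Step 1: for each T in {A,B,C,D}, ‖XP−T‖² = ‖XQ−T‖².
  have hsub4 : ({A, B, C, D} : Set E3) ⊆ ({A, B, C, D, E, F} : Set E3) := by
    intro x hx
    rcases hx with h | h | h | h
    · exact Or.inl h
    · exact Or.inr (Or.inl h)
    · exact Or.inr (Or.inr (Or.inl h))
    · exact Or.inr (Or.inr (Or.inr (Or.inl h)))
  have hnorm : ∀ T ∈ ({A, B, C, D} : Set E3), ‖XP - T‖ ^ 2 = ‖XQ - T‖ ^ 2 := by
    intro T hT
    obtain ⟨hXP, hYP, heP⟩ := hP T (hsub4 hT)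
    obtain ⟨hXQ, hYQ, heQ⟩ := hQ T (hsub4 hT)
    have g1 := gamma_eq_of_sol Xs Ys T XP YP hXP hYP heP
    have g2 := gamma_eq_of_sol Xs Ys T XQ YQ hXQ hYQ heQ
    have := hgamma T hT
    rw [g1, g2] at this
    linarith
  -- Step 2: all four points lie on the perpendicular-bisector plane of XP, XQ.
  set v := XP - XQ with hv_def
  have hv : v ≠ 0 := sub_ne_zero.mpr hXPQ
  have hplane : ∀ T ∈ ({A, B, C, D} : Set E3),
      (inner ℝ v T : ℝ) = (‖XP‖ ^ 2 - ‖XQ‖ ^ 2) / 2 := by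
    intro T hT
    have h := hnorm T hT
    rw [norm_sub_sq_real XP T, norm_sub_sq_real XQ T] at h
    rw [hv_def, inner_sub_left]
    linarith
  -- Step 3: vectorSpan is contained in the orthogonal complement of v.
  have hle : vectorSpan ℝ ({A, B, C, D} : Set E3) ≤ (ℝ ∙ v)ᗮ := by
    rw [vectorSpan_def, Submodule.span_le]
    rintro w ⟨x, hx, y, hy, rfl⟩
    rw [SetLike.mem_coe, Submodule.mem_orthogonal_singleton_iff_inner_right]
    have hx' := hplane x hx
    have hy' := hplane y hy
    simp only [vsub_eq_sub]
    rw [inner_sub_right, hx', hy']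
    ring
  -- Step 4: the orthogonal complement has rank 2.
  have hfin : Module.finrank ℝ ((ℝ ∙ v)ᗮ) = 2 := by
    have h1 := Submodule.finrank_add_finrank_orthogonal (K := (ℝ ∙ v))
    rw [finrank_span_singleton hv] at h1
    have h3 : Module.finrank ℝ E3 = 3 := finrank_euclideanSpace_fin
    omega
  have hrank : Module.rank ℝ ((ℝ ∙ v)ᗮ) = 2 := by
    rw [← Module.finrank_eq_rank, hfin]
    norm_num
  have := Submodule.rank_mono hle
  rw [hrank] at this
  exact this
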